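/- Suppose c_1 = 0 and that the complex roots r_1, r_2, …, r_k of P are pairwise distinct, with r_1 = r the principal root. Run the Zeroing Algorithm from real inputs β_1, …, β_k. If a_1, …, a_k are complex numbers such that q(1,t) = a_1 r_1^t + a_2 r_2^t + ⋯ + a_k r_k^t for all t ≥ 0, then a_1 = Q_0(r_1) / Π_{i=2}^{k} (r_1 − r_i). -/

import Mathlib

open Polynomial

/-- Principal coefficient of `q(1,t)`: if the roots `r₁, …, r_k` of `P` are pairwise
distinct with `r₁ = r` the principal root, and `q(1,t) = a₁ r₁^t + ⋯ + a_k r_k^t`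
for all `t ≥ 0`, then `a₁ = Q₀(r₁) / ∏_{i=2}^k (r₁ - rᵢ)`. -/
theorem principal_coefficient_formula
    (k : ℕ) (hk : 2 ≤ k) (c : ℕ → ℕ) (hc1 : c 1 = 0) (hck : 0 < c k)
    (Pr : Polynomial ℝ)
    (hPr : Pr = X ^ k - ∑ i ∈ Finset.Icc 1 k, C (c i : ℝ) * X ^ (k - i))
    (P : Polynomial ℂ)
    (hP : P = X ^ k - ∑ i ∈ Finset.Icc 1 k, C (c i : ℂ) * X ^ (k - i))
    (r : ℕ → ℂ) (hinj : Set.InjOn r ↑(Finset.Icc 1 k))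
    (hfact : P = ∏ i ∈ Finset.Icc 1 k, (X - C (r i)))
    (ρ : ℝ) (hρ : 0 < ρ) (hρroot : P.IsRoot (ρ : ℂ))
    (huniq : ∀ s : ℝ, 0 < s → P.IsRoot (s : ℂ) → s = ρ)
    (hr1 : r 1 = (ρ : ℂ))
    (β : ℕ → ℝ)
    (Q : ℕ → Polynomial ℝ)
    (hQ0 : Q 0 = ∑ n ∈ Finset.Icc 1 k, C (β n) * X ^ (k - n))
    (hQt : ∀ t, 1 ≤ t → Q t = X * Q (t - 1) - C ((Q (t - 1)).coeff (k - 1)) * Pr)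
    (a : ℕ → ℂ)
    (ha : ∀ t : ℕ, ((Q t).coeff (k - 1) : ℂ) = ∑ i ∈ Finset.Icc 1 k, a i * r i ^ t) :
    a 1 = ((Q 0).map (algebraMap ℝ ℂ)).eval (r 1) / ∏ i ∈ Finset.Icc 2 k, (r 1 - r i) := by
  classical
  set Qc : ℕ → Polynomial ℂ := fun t => (Q t).map (algebraMap ℝ ℂ) with hQcdef
  -- Pr maps to P
  have hmapP : Pr.map (algebraMap ℝ ℂ) = P := by
    rw [hPr, hP]
    push_cast
    simp [Polynomial.map_sub, Polynomial.map_pow, Polynomial.map_sum, Polynomial.map_mul]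
  -- recurrence over ℂ
  have hQct : ∀ t : ℕ, Qc (t + 1) = X * Qc t - C (((Q t).coeff (k - 1) : ℂ)) * P := by
    intro t
    have h := hQt (t + 1) (by omega)
    simp only [Nat.add_sub_cancel] at h
    show (Q (t + 1)).map (algebraMap ℝ ℂ) = _
    rw [h, Polynomial.map_sub, Polynomial.map_mul, Polynomial.map_mul, Polynomial.map_X,
      Polynomial.map_C, hmapP]
    norm_num
    rfl
  -- roots
  have hroot : ∀ j ∈ Finset.Icc 1 k, P.eval (r j) = 0 := by
    intro j hj
    rw [hfact, eval_prod]
    exact Finset.prod_eq_zero hj (by simp)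
  -- evaluation of Qc t at the roots
  have heval : ∀ j ∈ Finset.Icc 1 k, ∀ t : ℕ,
      (Qc t).eval (r j) = r j ^ t * (Qc 0).eval (r j) := by
    intro j hj t
    induction t with
    | zero => simp
    | succ t ih =>
      rw [hQct t]
      simp [hroot j hj, ih]
      ring
  -- coefficients of Pr at degree ≥ k
  have hPrk : ∀ n, k ≤ n → Pr.coeff n = if n = k then 1 else 0 := by
    intro n hn
    rw [hPr, coeff_sub, coeff_X_pow, Polynomial.finset_sum_coeff]
    rw [Finset.sum_eq_zero, sub_zero]
    intro i hi
    rw [coeff_C_mul, coeff_X_pow, if_neg, mul_zero]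
    simp only [Finset.mem_Icc] at hi
    omega
  -- high coefficients of Q t vanish
  have hQcoeff : ∀ t n, k ≤ n → (Q t).coeff n = 0 := by
    intro t
    induction t with
    | zero =>
      intro n hn
      rw [hQ0, Polynomial.finset_sum_coeff]
      apply Finset.sum_eq_zero
      intro i hi
      rw [coeff_C_mul, coeff_X_pow, if_neg, mul_zero]
      simp only [Finset.mem_Icc] at hi
      omega
    | succ t ih =>
      intro n hn
      have h := hQt (t + 1) (by omega)
      simp only [Nat.add_sub_cancel] at h
      obtain ⟨m, rfl⟩ : ∃ m, n = m + 1 := ⟨n - 1, by omega⟩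
      rw [h, coeff_sub, coeff_C_mul, coeff_X_mul]
      by_cases hnk : m + 1 = k
      · rw [hPrk _ hn, if_pos hnk, mul_one]
        have hm : m = k - 1 := by omega
        rw [hm, sub_self]
      · rw [ih m (by omega), hPrk _ hn, if_neg hnk, mul_zero, sub_zero]
  -- the polynomial f = ∏_{i=2}^k (X - r i)
  set f : Polynomial ℂ := ∏ i ∈ Finset.Icc 2 k, (X - C (r i)) with hf
  have hfmonic : f.Monic := monic_prod_of_monic _ _ fun i _ => monic_X_sub_C _
  have hfdeg : f.natDegree = k - 1 := by
    rw [hf, natDegree_prod_of_monic _ _ fun i _ => monic_X_sub_C _]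
    simp [natDegree_X_sub_C, Nat.card_Icc]
  have h1mem : (1 : ℕ) ∈ Finset.Icc 1 k := by simp; omega
  have hfr1 : f.eval (r 1) = ∏ i ∈ Finset.Icc 2 k, (r 1 - r i) := by
    simp [hf, eval_prod]
  have hfne : f.eval (r 1) ≠ 0 := by
    rw [hfr1]
    apply Finset.prod_ne_zero_iff.mpr
    intro i hi
    have hi' : i ∈ Finset.Icc 1 k := by
      simp only [Finset.mem_Icc] at hi ⊢; omega
    refine sub_ne_zero.mpr fun hcontra => ?_
    have := hinj (Finset.mem_coe.mpr h1mem) (Finset.mem_coe.mpr hi') hcontra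
    simp only [Finset.mem_Icc] at hi
    omega
  have hfzero : ∀ j ∈ Finset.Icc 2 k, f.eval (r j) = 0 := by
    intro j hj
    rw [hf, eval_prod]
    exact Finset.prod_eq_zero hj (by simp)
  -- the auxiliary polynomial R
  set R : Polynomial ℂ := ∑ m ∈ Finset.range k, C (f.coeff m) * Qc m with hR
  have hIccsplit : Finset.Icc 1 k = insert 1 (Finset.Icc 2 k) := by
    ext x
    simp only [Finset.mem_Icc, Finset.mem_insert]
    omega
  have h1notin : (1 : ℕ) ∉ Finset.Icc 2 k := by simp
  -- coefficient (k-1) of R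
  have hfsum : ∀ x : ℂ, f.eval x = ∑ m ∈ Finset.range k, f.coeff m * x ^ m := by
    intro x
    exact eval_eq_sum_range' (by omega) x
  have hRcoeff : R.coeff (k - 1) = a 1 * f.eval (r 1) := by
    rw [hR, Polynomial.finset_sum_coeff]
    have step : ∀ m ∈ Finset.range k,
        (C (f.coeff m) * Qc m).coeff (k - 1)
          = ∑ i ∈ Finset.Icc 1 k, f.coeff m * (a i * r i ^ m) := by
      intro m _
      rw [coeff_C_mul]
      have hc : (Qc m).coeff (k - 1) = (((Q m).coeff (k - 1) : ℝ) : ℂ) := by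
        simp [hQcdef, coeff_map]
      rw [hc, ha m, Finset.mul_sum]
    rw [Finset.sum_congr rfl step, Finset.sum_comm]
    have : ∀ i ∈ Finset.Icc 1 k,
        ∑ m ∈ Finset.range k, f.coeff m * (a i * r i ^ m) = a i * f.eval (r i) := by
      intro i _
      rw [hfsum (r i), Finset.mul_sum]
      apply Finset.sum_congr rfl
      intro m _
      ring
    rw [Finset.sum_congr rfl this, hIccsplit, Finset.sum_insert h1notin,
      Finset.sum_eq_zero, add_zero]
    intro j hj
    rw [hfzero j hj, mul_zero]
  -- evaluation of R at the roots
  have hReval : ∀ j ∈ Finset.Icc 1 k, R.eval (r j) = f.eval (r j) * (Qc 0).eval (r j) := by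
    intro j hj
    rw [hR, eval_finset_sum]
    have step : ∀ m ∈ Finset.range k,
        (C (f.coeff m) * Qc m).eval (r j) = f.coeff m * r j ^ m * (Qc 0).eval (r j) := by
      intro m _
      rw [eval_mul, eval_C, heval j hj m]
      ring
    rw [Finset.sum_congr rfl step, ← Finset.sum_mul, ← hfsum (r j)]
  -- high coefficients of R vanish
  have hRhigh : ∀ n, k ≤ n → R.coeff n = 0 := by
    intro n hn
    rw [hR, Polynomial.finset_sum_coeff]
    apply Finset.sum_eq_zero
    intro m _
    rw [coeff_C_mul]
    have : (Qc m).coeff n = 0 := by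
      simp [hQcdef, coeff_map, hQcoeff m n hn]
    rw [this, mul_zero]
  have hRdeg : R.natDegree ≤ k - 1 := by
    apply natDegree_le_iff_coeff_eq_zero.mpr
    intro m hm
    exact hRhigh m (by omega)
  -- f divides R
  have hdvd : f ∣ R := by
    rw [hf]
    apply Finset.prod_dvd_of_coprime
    · intro i hi j hj hij
      simp only [Finset.mem_coe, Finset.mem_Icc] at hi hj
      have hrij : r i ≠ r j := fun hcon => hij
        (hinj (Finset.mem_coe.mpr (by simp only [Finset.mem_Icc]; omega))
          (Finset.mem_coe.mpr (by simp only [Finset.mem_Icc]; omega)) hcon)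
      exact isCoprime_X_sub_C_of_isUnit_sub ((sub_ne_zero_of_ne hrij).isUnit)
    · intro i hi
      rw [dvd_iff_isRoot]
      have hi' : i ∈ Finset.Icc 1 k := by
        simp only [Finset.mem_Icc] at hi ⊢; omega
      exact (hReval i hi').trans (by rw [hfzero i hi, zero_mul])
  obtain ⟨g, hg⟩ := hdvd
  -- g is a constant
  have hgdeg : g.natDegree = 0 := by
    by_cases hg0 : g = 0
    · simp [hg0]
    · have hfne0 : f ≠ 0 := hfmonic.ne_zero
      have := natDegree_mul hfne0 hg0
      rw [← hg] at this
      omega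
  obtain ⟨lam, rfl⟩ := Polynomial.natDegree_eq_zero.mp hgdeg
  have hfcoeff : f.coeff (k - 1) = 1 := by
    have := hfmonic.coeff_natDegree
    rwa [hfdeg] at this
  -- extract lam two ways
  have hlam1 : R.coeff (k - 1) = lam := by
    rw [hg, coeff_mul_C, hfcoeff, one_mul]
  have hlam2 : R.eval (r 1) = f.eval (r 1) * lam := by
    rw [hg]; simp
  have key1 : a 1 * f.eval (r 1) = lam := by rw [← hRcoeff, hlam1]
  have key2 : f.eval (r 1) * (Qc 0).eval (r 1) = f.eval (r 1) * lam := by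
    rw [← hReval 1 h1mem, hlam2]
  have key3 : (Qc 0).eval (r 1) = lam := mul_left_cancel₀ hfne key2
  rw [eq_div_iff (hfr1 ▸ hfne), ← hfr1]
  show a 1 * f.eval (r 1) = (Qc 0).eval (r 1)
  rw [key1, key3]
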